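/- Group-closure underlying swap(Φ,Φ,Φ) ⊆ ¼Φ: for all μ, ν, λ ∈ ℤ₄ and all odd m, m', m'' ∈ ℤ₈, there exist ξ ∈ ℤ₄, an odd m* ∈ ℤ₈, and a scalar c ∈ {1, −1, i, −i} such that σ_λ R^{m''} (σ_ν R^{m'})‾ σ_μ R^{m} = c · σ_ξ R^{m*}, where X‾ denotes the entrywise complex conjugate of X. -/

import Mathlib

open Matrix Kronecker Complex

noncomputable section

/-- The Pauli matrices indexed by ℤ₄. -/
def pauli : ZMod 4 → Matrix (Fin 2) (Fin 2) ℂ := fun μ =>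
  if μ = 0 then 1
  else if μ = 1 then !![0, 1; 1, 0]
  else if μ = 2 then !![0, -Complex.I; Complex.I, 0]
  else !![1, 0; 0, -1]

/-- The rotation R = diag(e^{-iπ/8}, e^{iπ/8}). -/
def R : Matrix (Fin 2) (Fin 2) ℂ :=
  !![Complex.exp (-(Real.pi / 8 : ℝ) * Complex.I), 0;
     0, Complex.exp ((Real.pi / 8 : ℝ) * Complex.I)]

/-- The Bell vector |Φ⁺⟩ = (|00⟩+|11⟩)/√2. -/
def bell : Fin 2 × Fin 2 → ℂ := fun p =>
  if p.1 = p.2 then ((Real.sqrt 2 : ℝ) : ℂ)⁻¹ else 0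

/-- The Bell projector P_Φ = |Φ⁺⟩⟨Φ⁺|. -/
def PΦ : Matrix (Fin 2 × Fin 2) (Fin 2 × Fin 2) ℂ :=
  Matrix.of fun p q => bell p * (starRingEnd ℂ) (bell q)

/-- Φ⁺_{μ,m} = ((σ_μ R^m)† ⊗ I) P_Φ ((σ_μ R^m) ⊗ I). -/
def PhiProj (μ : ZMod 4) (m : ZMod 8) : Matrix (Fin 2 × Fin 2) (Fin 2 × Fin 2) ℂ :=
  ((pauli μ * R ^ m.val)ᴴ ⊗ₖ (1 : Matrix (Fin 2) (Fin 2) ℂ)) * PΦ *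
    ((pauli μ * R ^ m.val) ⊗ₖ (1 : Matrix (Fin 2) (Fin 2) ℂ))

/-- r = 2^{1/4}. -/
def r : ℝ := (2 : ℝ) ^ ((1 : ℝ) / 4)

/-- The stretched stabilizer states Ω. -/
def Ω : Set (Matrix (Fin 2) (Fin 2) ℂ) :=
  { (1 / 2 : ℂ) • (1 + (r : ℂ) • pauli 1),
    (1 / 2 : ℂ) • (1 - (r : ℂ) • pauli 1),
    (1 / 2 : ℂ) • (1 + (r : ℂ) • pauli 2),
    (1 / 2 : ℂ) • (1 - (r : ℂ) • pauli 2),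
    (1 / 2 : ℂ) • (1 + pauli 3),
    (1 / 2 : ℂ) • (1 - pauli 3) }

/-- The set Φ of entangled states/effects. -/
def PhiSet : Set (Matrix (Fin 2 × Fin 2) (Fin 2 × Fin 2) ℂ) :=
  { Q | ∃ μ : ZMod 4, ∃ m : ZMod 8, m ∈ ({1, 3, 5, 7} : Set (ZMod 8)) ∧ Q = PhiProj μ m }

/-- Place a 4×4 matrix `Q` on tensor factors (2,3) of (ℂ²)⊗⁴ (identity on factors 1 and 4). -/
def mid (Q : Matrix (Fin 2 × Fin 2) (Fin 2 × Fin 2) ℂ) :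
    Matrix ((Fin 2 × Fin 2) × (Fin 2 × Fin 2)) ((Fin 2 × Fin 2) × (Fin 2 × Fin 2)) ℂ :=
  Matrix.of fun p q =>
    (1 : Matrix (Fin 2) (Fin 2) ℂ) p.1.1 q.1.1 *
      Q (p.1.2, p.2.1) (q.1.2, q.2.1) *
      (1 : Matrix (Fin 2) (Fin 2) ℂ) p.2.2 q.2.2

/-- Partial trace over the first tensor factor of ℂ² ⊗ ℂ². -/
def ptr1 (M : Matrix (Fin 2 × Fin 2) (Fin 2 × Fin 2) ℂ) : Matrix (Fin 2) (Fin 2) ℂ :=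
  Matrix.of fun i j => ∑ a : Fin 2, M (a, i) (a, j)

/-- Partial trace over the second tensor factor of ℂ² ⊗ ℂ². -/
def ptr2 (M : Matrix (Fin 2 × Fin 2) (Fin 2 × Fin 2) ℂ) : Matrix (Fin 2) (Fin 2) ℂ :=
  Matrix.of fun i j => ∑ a : Fin 2, M (i, a) (j, a)

/-- Partial trace over the second and third tensor factors of (ℂ²)⊗⁴. -/
def ptr23
    (M : Matrix ((Fin 2 × Fin 2) × (Fin 2 × Fin 2)) ((Fin 2 × Fin 2) × (Fin 2 × Fin 2)) ℂ) :
    Matrix (Fin 2 × Fin 2) (Fin 2 × Fin 2) ℂ :=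
  Matrix.of fun p q => ∑ b : Fin 2, ∑ c : Fin 2, M ((p.1, b), (c, p.2)) ((q.1, b), (c, q.2))

end

noncomputable section

namespace St14
lemma pauli0 : pauli 0 = 1 := rfl
lemma pauli1 : pauli 1 = !![0, 1; 1, 0] := rfl
lemma pauli2 : pauli 2 = !![0, -Complex.I; Complex.I, 0] := rfl
lemma pauli3 : pauli 3 = !![1, 0; 0, -1] := rfl
lemma e4 : ∀ x : ZMod 4, x = 0 ∨ x = 1 ∨ x = 2 ∨ x = 3 := by decide

def pf (a b : ZMod 4) : ZMod 4 :=
  if a = 0 then b else if b = 0 then a else if a = b then 0 else 2 - (a + b)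
def ph (a b : ZMod 4) : ZMod 4 := if a = 0 ∨ b = 0 ∨ a = b then 0 else
  if (a = 1 ∧ b = 2) ∨ (a = 2 ∧ b = 3) ∨ (a = 3 ∧ b = 1) then 1 else 3

lemma pauli_mul (a b : ZMod 4) :
    pauli a * pauli b = Complex.I ^ (ph a b).val • pauli (pf a b) := by
  rcases e4 a with h|h|h|h <;> subst h <;> (rcases e4 b with h|h|h|h <;> subst h) <;>
  · ext i j
    fin_cases i <;> fin_cases j <;>
      simp (config := { decide := true }) [ph, pf, pauli, Matrix.mul_apply, Fin.sum_univ_two,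
        Complex.I_mul_I, pow_succ, Complex.ext_iff,
        show ZMod.val (1:ZMod 4) = 1 from rfl, show ZMod.val (3:ZMod 4) = 3 from rfl]

def d : ℂ := (Real.pi : ℂ) / 8 * Complex.I

lemma h16 : Complex.exp (16 * d) = 1 := by
  rw [show 16 * d = 2 * (Real.pi:ℂ) * Complex.I by rw [d]; ring, Complex.exp_two_pi_mul_I]

lemma h8 : Complex.exp (8 * d) = -1 := by
  rw [show 8 * d = (Real.pi:ℂ) * Complex.I by rw [d]; ring, Complex.exp_pi_mul_I]

lemma conj_d : (starRingEnd ℂ) d = -d := by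
  simp [d, map_div₀, Complex.conj_I, Complex.conj_ofReal, map_ofNat]

lemma conj_exp_d : (starRingEnd ℂ) (Complex.exp d) = Complex.exp (-d) := by
  rw [← Complex.exp_conj, conj_d]

lemma conj_exp_nd : (starRingEnd ℂ) (Complex.exp (-d)) = Complex.exp d := by
  rw [← Complex.exp_conj, map_neg, conj_d, neg_neg]

lemma R_d : R = Matrix.diagonal ![Complex.exp (-d), Complex.exp d] := by
  ext i j
  fin_cases i <;> fin_cases j <;> simp [R, Matrix.diagonal, d]

lemma R_pow (k : ℕ) : R ^ k =
    Matrix.diagonal ![Complex.exp (-(k * d)), Complex.exp (k * d)] := by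
  rw [R_d, Matrix.diagonal_pow]
  ext i j
  fin_cases i <;> fin_cases j <;>
    simp [Matrix.diagonal, Pi.pow_apply, ← Complex.exp_nat_mul, mul_comm]

lemma R16 : R ^ 16 = 1 := by
  rw [R_pow]
  have : ((16:ℕ):ℂ) = 16 := by norm_num
  rw [this]
  ext i j
  fin_cases i <;> fin_cases j <;>
    simp [Matrix.diagonal, h16, Complex.exp_neg]

lemma R8 : R ^ 8 = -1 := by
  rw [R_pow]
  have h : ((8:ℕ):ℂ) = 8 := by norm_num
  rw [h]
  ext i j
  fin_cases i <;> fin_cases j <;>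
    simp [Matrix.diagonal, h8, Complex.exp_neg]

lemma R_mod (a : ℕ) : R ^ a = R ^ (a % 16) := by
  conv_lhs => rw [← Nat.div_add_mod a 16]
  rw [pow_add, pow_mul, R16, one_pow, one_mul]

lemma R_congr {a b : ℕ} (h : a % 16 = b % 16) : R ^ a = R ^ b := by
  rw [R_mod a, R_mod b, h]

lemma e15a : Complex.exp (15 * d) = Complex.exp (-d) := by
  rw [show (15:ℂ) * d = -d + 16 * d by ring, Complex.exp_add, h16, mul_one]
lemma e15b : Complex.exp (-(15 * d)) = Complex.exp d := by
  rw [show -((15:ℂ) * d) = d + -(16 * d) by ring, Complex.exp_add, Complex.exp_neg, h16, inv_one,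
    mul_one]

lemma conjR : R.map (starRingEnd ℂ) = R ^ 15 := by
  rw [R_pow]
  have : ((15:ℕ):ℂ) = 15 := by norm_num
  rw [this, R_d]
  ext i j
  fin_cases i <;> fin_cases j <;>
    simp [Matrix.diagonal, Matrix.map_apply, e15a, e15b, conj_exp_d, conj_exp_nd]

lemma comm1 : R * pauli 1 = pauli 1 * R ^ 15 := by
  rw [R_pow, R_d]
  have : ((15:ℕ):ℂ) = 15 := by norm_num
  rw [this]
  ext i j
  fin_cases i <;> fin_cases j <;>
    simp [pauli1, Matrix.mul_apply, Fin.sum_univ_two, Matrix.diagonal, e15a, e15b]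

lemma comm2 : R * pauli 2 = pauli 2 * R ^ 15 := by
  rw [R_pow, R_d]
  have : ((15:ℕ):ℂ) = 15 := by norm_num
  rw [this]
  ext i j
  fin_cases i <;> fin_cases j <;>
    simp [pauli2, Matrix.mul_apply, Fin.sum_univ_two, Matrix.diagonal, e15a, e15b] <;> ring

lemma comm3 : R * pauli 3 = pauli 3 * R := by
  rw [R_d]
  ext i j
  fin_cases i <;> fin_cases j <;>
    simp [pauli3, Matrix.mul_apply, Fin.sum_univ_two, Matrix.diagonal]

def sE (a : ZMod 4) : ℕ := if a = 1 ∨ a = 2 then 15 else 1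

lemma commS (a : ZMod 4) : R * pauli a = pauli a * R ^ sE a := by
  rcases e4 a with h|h|h|h <;> subst h
  · rw [show sE 0 = 1 from by decide, pow_one, pauli0, one_mul, mul_one]
  · simpa [sE] using comm1
  · simpa [sE] using comm2
  · rw [show sE 3 = 1 from by decide, pow_one]
    exact comm3

lemma Rpow_comm (a : ZMod 4) (k : ℕ) : R ^ k * pauli a = pauli a * R ^ (sE a * k) := by
  induction k with
  | zero => simp
  | succ n ih =>
      rw [pow_succ, mul_assoc, commS a, ← mul_assoc, ih, mul_assoc, ← pow_add]
      ring_nf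

end St14

namespace St14

def s2 (a : ZMod 4) : ZMod 16 := if a = 1 ∨ a = 2 then 15 else 1

lemma sval (a : ZMod 4) : (s2 a).val = sE a := by
  rcases e4 a with h|h|h|h <;> subst h <;> decide

lemma I4 : Complex.I ^ 4 = 1 := by
  rw [show (4:ℕ) = 2 * 2 from rfl, pow_mul, Complex.I_sq]
  norm_num

lemma I_mod (n : ℕ) : Complex.I ^ n = Complex.I ^ (n % 4) := by
  conv_lhs => rw [← Nat.div_add_mod n 4]
  rw [pow_add, pow_mul, I4, one_pow, one_mul]

lemma I_congr {a b : ℕ} (h : a % 4 = b % 4) : Complex.I ^ a = Complex.I ^ b := by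
  rw [I_mod a, I_mod b, h]

def rep (p : ZMod 4 × ZMod 4 × ZMod 16) : Matrix (Fin 2) (Fin 2) ℂ :=
  Complex.I ^ p.1.val • (pauli p.2.1 * R ^ p.2.2.val)

def pmul (p q : ZMod 4 × ZMod 4 × ZMod 16) : ZMod 4 × ZMod 4 × ZMod 16 :=
  (p.1 + q.1 + ph p.2.1 q.2.1, pf p.2.1 q.2.1, s2 q.2.1 * p.2.2 + q.2.2)

lemma rep_mul (p q : ZMod 4 × ZMod 4 × ZMod 16) : rep p * rep q = rep (pmul p q) := by
  obtain ⟨c1, ξ1, k1⟩ := p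
  obtain ⟨c2, ξ2, k2⟩ := q
  have hmod : (sE ξ2 * k1.val + k2.val) % 16 = (s2 ξ2 * k1 + k2).val % 16 := by
    rw [ZMod.val_add, ZMod.val_mul, sval]
    generalize sE ξ2 * k1.val = A
    generalize k2.val = B
    omega
  have hmat : pauli ξ1 * R ^ k1.val * (pauli ξ2 * R ^ k2.val)
      = Complex.I ^ (ph ξ1 ξ2).val • (pauli (pf ξ1 ξ2) * R ^ (s2 ξ2 * k1 + k2).val) := by
    calc pauli ξ1 * R ^ k1.val * (pauli ξ2 * R ^ k2.val)
        = pauli ξ1 * ((R ^ k1.val * pauli ξ2) * R ^ k2.val) := by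
          simp only [mul_assoc]
      _ = pauli ξ1 * ((pauli ξ2 * R ^ (sE ξ2 * k1.val)) * R ^ k2.val) := by
          rw [Rpow_comm]
      _ = (pauli ξ1 * pauli ξ2) * R ^ (sE ξ2 * k1.val + k2.val) := by
          simp only [mul_assoc, pow_add]
      _ = Complex.I ^ (ph ξ1 ξ2).val • (pauli (pf ξ1 ξ2) * R ^ (sE ξ2 * k1.val + k2.val)) := by
          rw [pauli_mul, smul_mul_assoc]
      _ = Complex.I ^ (ph ξ1 ξ2).val • (pauli (pf ξ1 ξ2) * R ^ (s2 ξ2 * k1 + k2).val) := by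
          rw [R_congr hmod]
  have hc : Complex.I ^ c1.val * Complex.I ^ c2.val * Complex.I ^ (ph ξ1 ξ2).val
      = Complex.I ^ (c1 + c2 + ph ξ1 ξ2).val := by
    rw [← pow_add, ← pow_add]
    refine I_congr ?_
    rw [ZMod.val_add, ZMod.val_add]
    omega
  show (Complex.I ^ c1.val • (pauli ξ1 * R ^ k1.val)) *
      (Complex.I ^ c2.val • (pauli ξ2 * R ^ k2.val))
      = Complex.I ^ (c1 + c2 + ph ξ1 ξ2).val • (pauli (pf ξ1 ξ2) * R ^ (s2 ξ2 * k1 + k2).val)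
  rw [smul_mul_smul_comm, hmat, smul_smul, hc]

/-- phase of conjugating a Pauli -/
def pcph (a : ZMod 4) : ZMod 4 := if a = 2 then 2 else 0

lemma pauli_conj (a : ZMod 4) :
    (pauli a).map (starRingEnd ℂ) = Complex.I ^ (pcph a).val • pauli a := by
  rcases e4 a with h|h|h|h <;> subst h <;>
  · ext i j
    fin_cases i <;> fin_cases j <;>
      simp (config := { decide := true }) [pcph, pauli, Matrix.map_apply, Complex.ext_iff,
        pow_succ, Complex.I_mul_I, show ZMod.val (2:ZMod 4) = 2 from rfl]

lemma map_pow_conj (n : ℕ) :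
    (R ^ n).map (starRingEnd ℂ) = (R.map (starRingEnd ℂ)) ^ n := by
  induction n with
  | zero => simp
  | succ k ih => rw [pow_succ, pow_succ, Matrix.map_mul, ih]

lemma conj_factor (ν : ZMod 4) (n : ℕ) :
    (pauli ν * R ^ n).map (starRingEnd ℂ) = rep (pcph ν, ν, 15 * (n : ZMod 16)) := by
  rw [Matrix.map_mul, map_pow_conj, conjR, ← pow_mul, pauli_conj, smul_mul_assoc]
  show _ = Complex.I ^ (pcph ν).val • (pauli ν * R ^ (15 * (n : ZMod 16)).val)
  rw [R_congr (a := 15 * n) (b := (15 * (n : ZMod 16)).val) ?_]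
  rw [ZMod.val_mul, ZMod.val_natCast, show (15 : ZMod 16).val = 15 from rfl]
  generalize n = A
  omega

lemma pmul_parity (p q : ZMod 4 × ZMod 4 × ZMod 16) :
    (pmul p q).2.2.val % 2 = (p.2.2.val + q.2.2.val) % 2 := by
  obtain ⟨c1, ξ1, k1⟩ := p
  obtain ⟨c2, ξ2, k2⟩ := q
  show (s2 ξ2 * k1 + k2).val % 2 = _
  have h1 : k1.val < 16 := ZMod.val_lt k1
  rw [ZMod.val_add, ZMod.val_mul]
  rcases e4 ξ2 with h|h|h|h <;> subst h <;>
    simp only [show (s2 (0:ZMod 4)).val = 1 from by decide,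
      show (s2 (1:ZMod 4)).val = 15 from by decide,
      show (s2 (2:ZMod 4)).val = 15 from by decide,
      show (s2 (3:ZMod 4)).val = 1 from by decide] <;>
    omega

end St14

end

open St14

/-- Group closure underlying swap(Φ,Φ,Φ) ⊆ ¼Φ: for all μ, ν, λ ∈ ℤ₄ and
odd m, m', m'' ∈ ℤ₈ there are ξ ∈ ℤ₄, odd m* ∈ ℤ₈ and c ∈ {1, −1, i, −i} with
σ_λ R^{m''} (σ_ν R^{m'})‾ σ_μ R^{m} = c σ_ξ R^{m*}. -/
theorem stmt_14 (μ ν lam : ZMod 4) (m m' m'' : ZMod 8)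
    (hm : Odd m.val) (hm' : Odd m'.val) (hm'' : Odd m''.val) :
    ∃ ξ : ZMod 4, ∃ mstar : ZMod 8, Odd mstar.val ∧
      ∃ c ∈ ({1, -1, Complex.I, -Complex.I} : Set ℂ),
        pauli lam * R ^ m''.val * (pauli ν * R ^ m'.val).map (starRingEnd ℂ) *
            pauli μ * R ^ m.val
          = c • (pauli ξ * R ^ mstar.val) := by
  have hv : ∀ x : ZMod 8, ((x.val : ZMod 16)).val = x.val := fun x =>
    ZMod.val_natCast_of_lt (lt_trans (ZMod.val_lt x) (by norm_num))
  have h1 : pauli lam * R ^ m''.val = rep (0, lam, (m''.val : ZMod 16)) := by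
    show _ = Complex.I ^ (0 : ZMod 4).val • (pauli lam * R ^ ((m''.val : ZMod 16)).val)
    rw [show (0 : ZMod 4).val = 0 from rfl, pow_zero, one_smul, hv]
  have h3 : pauli μ * R ^ m.val = rep (0, μ, (m.val : ZMod 16)) := by
    show _ = Complex.I ^ (0 : ZMod 4).val • (pauli μ * R ^ ((m.val : ZMod 16)).val)
    rw [show (0 : ZMod 4).val = 0 from rfl, pow_zero, one_smul, hv]
  have h2 := conj_factor ν m'.val
  obtain ⟨c0, ξ0, k0, hq⟩ : ∃ c0 ξ0 k0,
      pmul (pmul (0, lam, (m''.val : ZMod 16)) (pcph ν, ν, 15 * (m'.val : ZMod 16)))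
        (0, μ, (m.val : ZMod 16)) = (c0, ξ0, k0) := ⟨_, _, _, rfl⟩
  have key : pauli lam * R ^ m''.val * (pauli ν * R ^ m'.val).map (starRingEnd ℂ) *
      pauli μ * R ^ m.val = rep (c0, ξ0, k0) := by
    rw [mul_assoc (pauli lam * R ^ m''.val * _), h1, h2, h3, rep_mul, rep_mul, hq]
  -- parity
  rw [Nat.odd_iff] at hm hm' hm''
  have par : k0.val % 2 = 1 := by
    have t1 := pmul_parity (pmul (0, lam, (m''.val : ZMod 16)) (pcph ν, ν, 15 * (m'.val : ZMod 16)))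
      (0, μ, (m.val : ZMod 16))
    have t2 := pmul_parity (0, lam, ((m''.val : ZMod 16) : ZMod 16)) (pcph ν, ν, 15 * (m'.val : ZMod 16))
    rw [hq] at t1
    simp only at t1 t2
    have v1 : ((m''.val : ZMod 16)).val = m''.val := hv _
    have v3 : ((m.val : ZMod 16)).val = m.val := hv _
    have v2 : (15 * (m'.val : ZMod 16)).val % 2 = 1 := by
      rw [ZMod.val_mul, show (15 : ZMod 16).val = 15 from rfl, ZMod.val_natCast]
      generalize m'.val = A at hm' ⊢
      omega
    omega
  have hk16 : k0.val < 16 := ZMod.val_lt _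
  have hm8 : ((k0.val : ZMod 8)).val = k0.val % 8 := ZMod.val_natCast _ _
  refine ⟨ξ0, (k0.val : ZMod 8), by rw [Nat.odd_iff, hm8]; omega,
    Complex.I ^ c0.val * (if k0.val < 8 then 1 else -1), ?_, ?_⟩
  · rcases e4 c0 with h|h|h|h <;> rw [h] <;> split_ifs <;>
      norm_num [Set.mem_insert_iff, Set.mem_singleton_iff,
        show (0:ZMod 4).val = 0 from rfl, show (1:ZMod 4).val = 1 from rfl,
        show (2:ZMod 4).val = 2 from rfl, show (3:ZMod 4).val = 3 from rfl,
        pow_succ, Complex.I_mul_I]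
  · rw [key]
    show Complex.I ^ c0.val • (pauli ξ0 * R ^ k0.val) = _
    rw [hm8]
    by_cases hlt : k0.val < 8
    · rw [if_pos hlt, mul_one, Nat.mod_eq_of_lt hlt]
    · rw [if_neg hlt]
      have h8 : k0.val = 8 + k0.val % 8 := by omega
      conv_lhs => rw [h8]
      rw [pow_add, R8]
      simp only [neg_one_mul, mul_neg, mul_neg_one, neg_smul, smul_neg, mul_one]
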